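/- For every trace t₁ and t₂ and every set of events U ⊆ Evt, if t₁ ⋉ t₂ then hide_U(t₁) ⋉ hide_U(t₂), where hide_U deletes from a trace each occurrence of each event in U (including inside critical segments). -/

import Mathlib

/- Tokens, traces, the unwrap rewriting relation and the trace simulation
relation of "Required Behavior of Sequence Diagrams: Semantics and
Conformance" (Lu & Kim). -/

namespace SDPaper

/-- An atom is an event or a guard condition. -/
inductive Atom (E C : Type) : Type where
  | evt : E → Atom E C
  | cnd : C → Atom E C

/-- A token is an event, a condition, or a critical segment wrapping a finite
sequence of events and conditions. -/
inductive Tok (E C : Type) : Type where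
  | atom : Atom E C → Tok E C
  | crit : List (Atom E C) → Tok E C

/-- A trace is a finite sequence of tokens. -/
abbrev Trace (E C : Type) : Type := List (Tok E C)

/-- The token carrying a guard condition. -/
def condTok {E C : Type} (c : C) : Tok E C := Tok.atom (Atom.cnd c)

/-- The token carrying an event. -/
def evtTok {E C : Type} (e : E) : Tok E C := Tok.atom (Atom.evt e)

/-- The unwrap rewriting relation `↷` on traces: one step exposes one critical
segment, `α⟨σ⟩β ↷ ασβ`. -/
inductive Unwrap {E C : Type} : Trace E C → Trace E C → Prop where
  | step (α β : Trace E C) (σ : List (Atom E C)) :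
      Unwrap (α ++ Tok.crit σ :: β) (α ++ σ.map Tok.atom ++ β)

/-- The reflexive–transitive closure `↷*` of the unwrap relation. -/
def Unwraps {E C : Type} : Trace E C → Trace E C → Prop :=
  Relation.ReflTransGen Unwrap

section Sim

variable {E C : Type} (ent : C → C → Prop)

/-- Simulation on atoms: `c₁ ⋉ c₂` if `c₂ ⊨_c c₁`; `e₁ ⋉ e₂` if `e₁ = e₂`.
Here `ent c₁ c₂` denotes the entailment `c₁ ⊨_c c₂`. -/
inductive AtomSim : Atom E C → Atom E C → Prop where
  | evt (e : E) : AtomSim (Atom.evt e) (Atom.evt e)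
  | cnd {c₁ c₂ : C} : ent c₂ c₁ → AtomSim (Atom.cnd c₁) (Atom.cnd c₂)

/-- Simulation on sequences of events and conditions (used inside critical
segments, which contain no nested critical segments): there is a strictly
increasing reindexing function `η` such that corresponding atoms are similar
and every position outside the image of `η` carries a condition. -/
def SeqSim (α γ : List (Atom E C)) : Prop :=
  ∃ η : Fin α.length → Fin γ.length, StrictMono η ∧
    (∀ i : Fin α.length, AtomSim ent (α.get i) (γ.get (η i))) ∧
    (∀ j : Fin γ.length, (∀ i, η i ≠ j) → ∃ c : C, γ.get j = Atom.cnd c)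

/-- Simulation on tokens: a critical segment can only be simulated by a
critical segment, `⟨α⟩ ⋉ ⟨γ⟩` if `α ⋉ γ`. -/
inductive TokSim : Tok E C → Tok E C → Prop where
  | atom {a b : Atom E C} : AtomSim ent a b → TokSim (Tok.atom a) (Tok.atom b)
  | crit {α γ : List (Atom E C)} : SeqSim ent α γ → TokSim (Tok.crit α) (Tok.crit γ)

/-- The trace simulation relation `α ⋉ γ`: there are a trace `β` with
`α ↷* β` and a strictly increasing `η : dom(β) → dom(γ)` such that
`β(i) ⋉ γ(η(i))` for every `i` and every position of `γ` outside the image of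
`η` carries a condition. -/
def TraceSim (α γ : Trace E C) : Prop :=
  ∃ β : Trace E C, Unwraps α β ∧
    ∃ η : Fin β.length → Fin γ.length, StrictMono η ∧
      (∀ i : Fin β.length, TokSim ent (β.get i) (γ.get (η i))) ∧
      (∀ j : Fin γ.length, (∀ i, η i ≠ j) → ∃ c : C, γ.get j = condTok c)

end Sim

end SDPaper

namespace SDPaper

open Classical in
/-- `hide_U` on sequences of events and conditions: delete each occurrence of
each event in `U`. -/
noncomputable def hideAtoms {E C : Type} (U : Set E) (σ : List (Atom E C)) :
    List (Atom E C) :=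
  σ.filterMap fun a =>
    match a with
    | Atom.evt e => if e ∈ U then none else some (Atom.evt e)
    | Atom.cnd c => some (Atom.cnd c)

open Classical in
/-- `hide_U` on traces: replace each occurrence of each event `e ∈ U`
(including inside critical segments) with the empty string `ε`. -/
noncomputable def hideTrace {E C : Type} (U : Set E) (t : Trace E C) : Trace E C :=
  t.filterMap fun tok =>
    match tok with
    | Tok.atom (Atom.evt e) => if e ∈ U then none else some (Tok.atom (Atom.evt e))
    | Tok.atom (Atom.cnd c) => some (Tok.atom (Atom.cnd c))
    | Tok.crit σ => some (Tok.crit (hideAtoms U σ))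


section EmbAux

variable {X : Type}

inductive Emb (R : X → X → Prop) (P : X → Prop) : List X → List X → Prop
  | nil : Emb R P [] []
  | cons {a b : X} {l l' : List X} : R a b → Emb R P l l' → Emb R P (a :: l) (b :: l')
  | skip {b : X} {l l' : List X} : P b → Emb R P l l' → Emb R P l (b :: l')

def IdxSim (R : X → X → Prop) (P : X → Prop) (α γ : List X) : Prop :=
  ∃ η : Fin α.length → Fin γ.length, StrictMono η ∧
    (∀ i, R (α.get i) (γ.get (η i))) ∧
    (∀ j, (∀ i, η i ≠ j) → P (γ.get j))

theorem Emb.toIdx {R : X → X → Prop} {P : X → Prop} {α γ : List X}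
    (h : Emb R P α γ) : IdxSim R P α γ := by
  induction h with
  | nil => exact ⟨Fin.elim0, fun i => i.elim0, fun i => i.elim0, fun j _ => j.elim0⟩
  | @cons a b l l' hr _ ih =>
    obtain ⟨η, hmono, hrel, hcond⟩ := ih
    refine ⟨fun i => Fin.cases (⟨0, Nat.succ_pos _⟩ : Fin (l'.length + 1))
      (fun k => (η k).succ) i, ?_, ?_, ?_⟩
    · intro i j hij
      rcases Fin.eq_zero_or_eq_succ i with rfl | ⟨i', rfl⟩ <;>
        rcases Fin.eq_zero_or_eq_succ j with rfl | ⟨j', rfl⟩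
      · exact absurd hij (lt_irrefl _)
      · simp only [Fin.cases_zero, Fin.cases_succ]
        exact Fin.succ_pos _
      · exact absurd hij (Fin.not_lt.mpr (Fin.zero_le _))
      · simp only [Fin.cases_succ]
        exact Fin.succ_lt_succ_iff.mpr (hmono (Fin.succ_lt_succ_iff.mp hij))
    · intro i
      rcases Fin.eq_zero_or_eq_succ i with rfl | ⟨i', rfl⟩
      · simp only [Fin.cases_zero]
        exact hr
      · simp only [Fin.cases_succ]
        exact hrel i'
    · intro j hj
      rcases Fin.eq_zero_or_eq_succ j with rfl | ⟨j', rfl⟩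
      · exact absurd Fin.cases_zero (hj ⟨0, Nat.succ_pos _⟩)
      · have h' : ∀ i, η i ≠ j' := by
          intro i hi
          exact hj i.succ (by simp [hi])
        exact hcond j' h'
  | @skip b l l' hb _ ih =>
    obtain ⟨η, hmono, hrel, hcond⟩ := ih
    refine ⟨fun i => (η i).succ, ?_, ?_, ?_⟩
    · intro i j hij
      exact Fin.succ_lt_succ_iff.mpr (hmono hij)
    · intro i
      exact hrel i
    · intro j hj
      rcases Fin.eq_zero_or_eq_succ j with rfl | ⟨j', rfl⟩
      · exact hb
      · have h' : ∀ i, η i ≠ j' := by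
          intro i hi
          exact hj i (by simp [hi])
        exact hcond j' h'

theorem emb_nil_of_all {R : X → X → Prop} {P : X → Prop} :
    ∀ {γ : List X}, (∀ j : Fin γ.length, P (γ.get j)) → Emb R P [] γ := by
  intro γ
  induction γ with
  | nil => exact fun _ => Emb.nil
  | cons b γ' ih =>
    intro h
    exact Emb.skip (h ⟨0, Nat.succ_pos _⟩) (ih (fun j => h j.succ))

theorem IdxSim.toEmb {R : X → X → Prop} {P : X → Prop} :
    ∀ {γ α : List X}, IdxSim R P α γ → Emb R P α γ := by
  intro γ
  induction γ with
  | nil =>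
    rintro α ⟨η, -, -, -⟩
    cases α with
    | nil => exact Emb.nil
    | cons a l => exact (η ⟨0, Nat.succ_pos _⟩).elim0
  | cons b γ' ih =>
    rintro α ⟨η, hmono, hrel, hcond⟩
    cases α with
    | nil => exact emb_nil_of_all (fun j => hcond j (fun i => i.elim0))
    | cons a α' =>
      by_cases h0 : η ⟨0, Nat.succ_pos _⟩ = ⟨0, Nat.succ_pos _⟩
      · have hne : ∀ i : Fin α'.length, η i.succ ≠ ⟨0, Nat.succ_pos _⟩ := by
          intro i hi
          have hlt : η ⟨0, Nat.succ_pos _⟩ < η i.succ := hmono (Fin.succ_pos i)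
          rw [h0, hi] at hlt
          exact absurd hlt (lt_irrefl _)
        refine Emb.cons ?_ (ih ⟨fun i => (η i.succ).pred (hne i), ?_, ?_, ?_⟩)
        · have := hrel ⟨0, Nat.succ_pos _⟩
          rwa [h0] at this
        · intro i j hij
          apply Fin.pred_lt_pred_iff.mpr
          exact hmono (Fin.succ_lt_succ_iff.mpr hij)
        · intro i
          have h1 := hrel i.succ
          rw [show η i.succ = ((η i.succ).pred (hne i)).succ from (Fin.succ_pred _ _).symm] at h1
          exact h1
        · intro j hj
          have h' : ∀ i : Fin (a :: α').length, η i ≠ j.succ := by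
            intro i hi
            rcases Fin.eq_zero_or_eq_succ i with rfl | ⟨i', rfl⟩
            · rw [show (0 : Fin (α'.length + 1)) = ⟨0, Nat.succ_pos _⟩ from rfl, h0] at hi
              exact (Fin.succ_ne_zero j) hi.symm
            · refine hj i' (Fin.ext ?_)
              refine (Fin.coe_pred _ _).trans ?_
              rw [hi, Fin.val_succ]
              simp
          exact hcond j.succ h'
      · have hne : ∀ i, η i ≠ ⟨0, Nat.succ_pos _⟩ := by
          intro i hi
          have hle : η ⟨0, Nat.succ_pos _⟩ ≤ η i := hmono.monotone (Fin.zero_le i)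
          rw [hi] at hle
          exact h0 (Fin.le_zero_iff.mp hle)
        refine Emb.skip (hcond ⟨0, Nat.succ_pos _⟩ hne) (ih ⟨fun i => (η i).pred (hne i), ?_, ?_, ?_⟩)
        · intro i j hij
          apply Fin.pred_lt_pred_iff.mpr
          exact hmono hij
        · intro i
          have h1 := hrel i
          rw [show η i = ((η i).pred (hne i)).succ from (Fin.succ_pred _ _).symm] at h1
          exact h1
        · intro j hj
          have h' : ∀ i, η i ≠ j.succ := by
            intro i hi
            refine hj i (Fin.ext ?_)
            refine (Fin.coe_pred _ _).trans ?_
            rw [hi, Fin.val_succ]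
            simp
          exact hcond j.succ h'

theorem Emb.map_filter {Y : Type} {R : X → X → Prop} {P : X → Prop}
    {R' : Y → Y → Prop} {P' : Y → Prop} (f : X → Option Y)
    (hR : ∀ a b, R a b → (f a = none ∧ f b = none) ∨
      ∃ a' b', f a = some a' ∧ f b = some b' ∧ R' a' b')
    (hP : ∀ b, P b → ∃ b', f b = some b' ∧ P' b') :
    ∀ {α γ : List X}, Emb R P α γ → Emb R' P' (α.filterMap f) (γ.filterMap f) := by
  intro α γ h
  induction h with
  | nil => exact Emb.nil
  | @cons a b l l' hr _ ih =>
    rcases hR a b hr with ⟨ha, hb⟩ | ⟨a', b', ha, hb, hr'⟩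
    · simpa [List.filterMap_cons, ha, hb] using ih
    · simpa [List.filterMap_cons, ha, hb] using Emb.cons hr' ih
  | @skip b l l' hb _ ih =>
    obtain ⟨b', hb', hP'⟩ := hP b hb
    simpa [List.filterMap_cons, hb'] using Emb.skip hP' ih

end EmbAux

open Classical in
theorem hideTrace_map_atom {E C : Type} (U : Set E) (σ : List (Atom E C)) :
    hideTrace U (σ.map Tok.atom) = (hideAtoms U σ).map Tok.atom := by
  induction σ with
  | nil => rfl
  | cons a σ' ih =>
    cases a with
    | evt e =>
      by_cases he : e ∈ U <;>
        simp [hideTrace, hideAtoms, List.filterMap_cons, he] <;>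
        simpa [hideTrace, hideAtoms] using ih
    | cnd c =>
      simp only [List.map_cons, hideTrace, hideAtoms, List.filterMap_cons]
      simpa [hideTrace, hideAtoms] using ih

open Classical in
theorem hideTrace_append {E C : Type} (U : Set E) (s t : Trace E C) :
    hideTrace U (s ++ t) = hideTrace U s ++ hideTrace U t := by
  simp [hideTrace, List.filterMap_append]

open Classical in
theorem hideTrace_crit_cons {E C : Type} (U : Set E) (σ : List (Atom E C)) (t : Trace E C) :
    hideTrace U (Tok.crit σ :: t) = Tok.crit (hideAtoms U σ) :: hideTrace U t := by
  simp [hideTrace, List.filterMap_cons]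

theorem unwrap_hide {E C : Type} (U : Set E) {t₁ t₂ : Trace E C} (h : Unwrap t₁ t₂) :
    Unwrap (hideTrace U t₁) (hideTrace U t₂) := by
  cases h with
  | step α β σ =>
    rw [hideTrace_append, hideTrace_crit_cons, hideTrace_append, hideTrace_append,
      hideTrace_map_atom]
    exact Unwrap.step _ _ _

open Classical in
theorem seqSim_hide {E C : Type} (ent : C → C → Prop) (U : Set E)
    {α γ : List (Atom E C)} (h : SeqSim ent α γ) :
    SeqSim ent (hideAtoms U α) (hideAtoms U γ) := by
  have h' : Emb (AtomSim ent) (fun x => ∃ c : C, x = Atom.cnd c) α γ := IdxSim.toEmb h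
  have h2 := Emb.map_filter (R' := AtomSim ent) (P' := fun x => ∃ c : C, x = Atom.cnd c)
    (fun a => match a with
      | Atom.evt e => if e ∈ U then none else some (Atom.evt e)
      | Atom.cnd c => some (Atom.cnd c)) ?_ ?_ h'
  · exact h2.toIdx
  · rintro a b hab
    cases hab with
    | evt e =>
      by_cases he : e ∈ U
      · left; constructor <;> simp [he]
      · right; exact ⟨_, _, by simp [he], by simp [he], AtomSim.evt e⟩
    | cnd hc => right; exact ⟨_, _, rfl, rfl, AtomSim.cnd hc⟩
  · rintro b ⟨c, rfl⟩
    exact ⟨_, rfl, c, rfl⟩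

open Classical in
theorem tokSim_hide_emb {E C : Type} (ent : C → C → Prop) (U : Set E)
    {β γ : Trace E C} (h : Emb (TokSim ent) (fun x => ∃ c : C, x = condTok c) β γ) :
    Emb (TokSim ent) (fun x => ∃ c : C, x = condTok c)
      (hideTrace U β) (hideTrace U γ) := by
  refine Emb.map_filter _ ?_ ?_ h
  · rintro a b hab
    cases hab with
    | atom hab' =>
      cases hab' with
      | evt e =>
        by_cases he : e ∈ U
        · left; constructor <;> simp [he]
        · right; exact ⟨_, _, by simp [he], by simp [he], TokSim.atom (AtomSim.evt e)⟩
      | cnd hc => right; exact ⟨_, _, rfl, rfl, TokSim.atom (AtomSim.cnd hc)⟩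
    | crit hseq =>
      right; exact ⟨_, _, rfl, rfl, TokSim.crit (seqSim_hide ent U hseq)⟩
  · rintro b ⟨c, rfl⟩
    exact ⟨_, rfl, c, rfl⟩


/-- hiding preserves trace simulation: for all traces `t₁, t₂`
and every set of events `U ⊆ Evt`, if `t₁ ⋉ t₂` then
`hide_U(t₁) ⋉ hide_U(t₂)` (given that `⊨_c` is reflexive and transitive). -/
theorem hideTrace_preserves_traceSim {E C : Type} (ent : C → C → Prop)
    (ent_refl : ∀ c : C, ent c c)
    (ent_trans : ∀ c₁ c₂ c₃ : C, ent c₁ c₂ → ent c₂ c₃ → ent c₁ c₃)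
    (U : Set E) (t₁ t₂ : Trace E C) (h : TraceSim ent t₁ t₂) :
    TraceSim ent (hideTrace U t₁) (hideTrace U t₂) := by
  obtain ⟨β, hu, hidx⟩ := h
  refine ⟨hideTrace U β, ?_, ?_⟩
  · exact Relation.ReflTransGen.lift (hideTrace U) (fun a b hab => unwrap_hide U hab) _ _ hu
  · have h' : Emb (TokSim ent) (fun x => ∃ c : C, x = condTok c) β t₂ := IdxSim.toEmb hidx
    exact (tokSim_hide_emb ent U h').toIdx

end SDPaper
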